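/- Let R be a supervisor realization that is robust with respect to G, X_crit and A, and let L_R ⊆ L(𝒜) be defined inductively by: ε ∈ L_R; if s ∈ L_R and the state of 𝒜 reached by s is a player-2 state, then se ∈ L_R for every e ∈ Σ_{o,e} with se ∈ L(𝒜); if s ∈ L_R and the state reached by s is a player-1 state, then sγ ∈ L_R for γ = Σ_uc and for γ = C_R(η(s)), where η : E* → Σ_o* is the natural projection erasing all events of E not in Σ_o. Then L_R ⊆ L(𝒜^trim), i.e., no string of L_R reaches a state q of 𝒜 with I₁(q) ∩ X_crit ≠ ∅. -/

import Mathlib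

attribute [local instance] Classical.propDecidable

noncomputable section

namespace RobustDES

/-- Events of the attacked system `Σ_m = Σ ∪ Σ_a^i ∪ Σ_a^d`:
`plain a` is a legitimate event `a ∈ Σ`, `ins a` is the inserted copy `a_i`
and `del a` is the deleted copy `a_d`. -/
inductive Ev (S : Type) : Type
  | plain : S → Ev S
  | ins : S → Ev S
  | del : S → Ev S

/-- Extension of a partial transition function to strings. -/
def run {X E : Type} (δ : X → E → Option X) : X → List E → Option X
  | x, [] => some x
  | x, e :: s => (δ x e).bind fun y => run δ y s

/-- The language generated by a partial automaton `(X, δ, x0)`. -/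
def Lang {X E : Type} (δ : X → E → Option X) (x0 : X) : Set (List E) :=
  { s | (run δ x0 s).isSome }

variable {S XG XR XA : Type}

/-- The projection `P^G : Σ_m* → Σ*` (`a, a_d ↦ a`, `a_i ↦ ε`). -/
def PGproj : List (Ev S) → List S := fun s =>
  s.flatMap fun e =>
    match e with
    | .plain a => [a]
    | .del a => [a]
    | .ins _ => []

/-- The projection `P^S : Σ_m* → Σ*` (`a, a_i ↦ a`, `a_d ↦ ε`). -/
def PSproj : List (Ev S) → List S := fun s =>
  s.flatMap fun e =>
    match e with
    | .plain a => [a]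
    | .ins a => [a]
    | .del _ => []

/-- Natural projection `P_{ΣΣo}` erasing events not in `So`. -/
def projOn (So : Set S) (s : List S) : List S :=
  s.filter fun e => decide (e ∈ So)

/-- Membership of a tagged event in `Σ_{o,e} = Σ_o ∪ Σ_a^i ∪ Σ_a^d`. -/
def inOe (So Sa : Set S) : Ev S → Prop
  | .plain a => a ∈ So
  | .ins a => a ∈ Sa
  | .del a => a ∈ Sa

/-- Natural projection `P_{Σ_mΣ_{o,e}}` erasing the unobservable events `Σ_uo`. -/
def projOe (So : Set S) : List (Ev S) → List (Ev S) := fun s =>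
  s.flatMap fun e =>
    match e with
    | .plain a => if a ∈ So then [Ev.plain a] else []
    | e => [e]

/-- Transition function of the attacked plant `G_a` (over `Σ_m`):
`δ_{G_a}(x,e) = δ_G(x, P^G(e))`. -/
def δGa (Sa : Set S) (δG : XG → S → Option XG) : XG → Ev S → Option XG
  | x, .plain a => δG x a
  | x, .del a => if a ∈ Sa then δG x a else none
  | x, .ins a => if a ∈ Sa then some x else none

/-- Active (legitimate) event set of a supervisor state. -/
def ΓR (δR : XR → S → Option XR) (y : XR) : Set S := {e | (δR y e).isSome}

/-- Transition function of the attacked supervisor `R_a` (over `Σ_m`). -/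
def δRa (Sa : Set S) (δR : XR → S → Option XR) : XR → Ev S → Option XR
  | y, .plain a => δR y a
  | y, .ins a =>
      if a ∈ Sa then (if (δR y a).isSome then δR y a else some y) else none
  | y, .del a =>
      if a ∈ Sa then (if (δR y a).isSome then some y else none) else none

/-- `R` is a supervisor realization: every uncontrollable event is enabled
everywhere and enabled unobservable events self-loop. -/
def IsSupRealization (So Suc : Set S) (δR : XR → S → Option XR) : Prop :=
  (∀ x e, e ∈ Suc → (δR x e).isSome) ∧
  (∀ x e, e ∉ So → (δR x e).isSome → δR x e = some x)

/-- `A` is an attack automaton over `Σ_{o,e}`: it is complete on `Σ_o \ Σ_a`,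
for every `e ∈ Σ_a` either `e` or `e_d` is defined, and it is undefined outside
`Σ_{o,e}`. -/
def IsAttack (So Sa : Set S) (δA : XA → Ev S → Option XA) : Prop :=
  (∀ q a, a ∈ So → a ∉ Sa → (δA q (.plain a)).isSome) ∧
  (∀ q a, a ∈ Sa → ((δA q (.plain a)).isSome ∨ (δA q (.del a)).isSome)) ∧
  (∀ q e, ¬ inOe So Sa e → δA q e = none)

/-- Transition function of the composition `G_a || R_a || A` over `Σ_m`:
all three components move on events of `Σ_{o,e}`, only `G_a` and `R_a` move on
unobservable events. -/
def δGRA (So Sa : Set S) (δG : XG → S → Option XG) (δR : XR → S → Option XR)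
    (δA : XA → Ev S → Option XA) :
    XG × XR × XA → Ev S → Option (XG × XR × XA) := fun p e =>
  match e with
  | .plain a =>
    if a ∈ So then
      match δGa Sa δG p.1 (.plain a), δRa Sa δR p.2.1 (.plain a), δA p.2.2 (.plain a) with
      | some x, some y, some z => some (x, y, z)
      | _, _, _ => none
    else
      match δGa Sa δG p.1 (.plain a), δRa Sa δR p.2.1 (.plain a) with
      | some x, some y => some (x, y, p.2.2)
      | _, _ => none
  | e =>
      match δGa Sa δG p.1 e, δRa Sa δR p.2.1 e, δA p.2.2 e with
      | some x, some y, some z => some (x, y, z)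
      | _, _, _ => none

/-- Transition function of the composition `G_a || R_a` over `Σ_m`. -/
def δGaRa (Sa : Set S) (δG : XG → S → Option XG) (δR : XR → S → Option XR) :
    XG × XR → Ev S → Option (XG × XR) := fun p e =>
  match δGa Sa δG p.1 e, δRa Sa δR p.2 e with
  | some x, some y => some (x, y)
  | _, _ => none

/-- `R` is robust w.r.t. `G`, `X_crit` and `A`:
`δ_G(x_{0,G}, s) ∉ X_crit` for every `s ∈ L(S_A/G) = P^G(L(G_a||R_a||A))`. -/
def Robust (So Sa : Set S) (Xcrit : Set XG)
    (δG : XG → S → Option XG) (x0G : XG)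
    (δR : XR → S → Option XR) (x0R : XR)
    (δA : XA → Ev S → Option XA) (x0A : XA) : Prop :=
  ∀ t ∈ Lang (δGRA So Sa δG δR δA) (x0G, x0R, x0A),
    ∀ x, run δG x0G (PGproj t) = some x → x ∉ Xcrit

/-- Total extension `Δ_R` of `δ_R` over observable strings. -/
def ΔRrun (δR : XR → S → Option XR) : XR → List S → XR
  | y, [] => y
  | y, e :: s => ΔRrun δR ((δR y e).getD y) s

/-- Control decision `C_R(s) = Γ_R(Δ_R(x_{0,R}, s))`. -/
def CR (δR : XR → S → Option XR) (x0R : XR) (s : List S) : Set S :=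
  {e | (δR (ΔRrun δR x0R s) e).isSome}

/-- The state estimate under attack
`RE(s) = {x : x = δ_{G_a}(x_{0,G}, t), t ∈ P⁻¹_{Σ_mΣ_{o,e}}(s) ∩ L(G_a||R_a||A)}`. -/
def RE (So Sa : Set S) (δG : XG → S → Option XG) (x0G : XG)
    (δR : XR → S → Option XR) (x0R : XR)
    (δA : XA → Ev S → Option XA) (x0A : XA) (s : List (Ev S)) : Set XG :=
  {x | ∃ t, projOe So t = s ∧ t ∈ Lang (δGRA So Sa δG δR δA) (x0G, x0R, x0A) ∧
        run (δGa Sa δG) x0G t = some x}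

/-! ### The arena -/

/-- Unobservable reach `UR_γ(Q)`. -/
def URch (So : Set S) (δG : XG → S → Option XG) (γ : Set S) (Q : Set XG) : Set XG :=
  {x | ∃ t : List S, (∀ a ∈ t, a ∉ So ∧ a ∈ γ) ∧ ∃ q ∈ Q, run δG q t = some x}

/-- Observable reach `NX_e(Q)`. -/
def NXr (δG : XG → S → Option XG) (a : S) (Q : Set XG) : Set XG :=
  {x | ∃ q ∈ Q, δG q a = some x}

/-- Active event set `Γ_G(Q)` of a set of plant states. -/
def ΓGset (δG : XG → S → Option XG) (Q : Set XG) : Set S :=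
  {a | ∃ x ∈ Q, (δG x a).isSome}

/-- Player-1 states of the arena. -/
abbrev AQ1 (XG XA : Type) := Set XG × XA

/-- Player-2 states of the arena. -/
abbrev AQ2 (S XG XA : Type) := Set XG × XA × Set S × Option S

/-- Player-1 transition `h₁((S₁,S₂),γ) = (UR_γ(S₁), S₂, γ, ε)`. -/
def h1 (So : Set S) (δG : XG → S → Option XG) (p : AQ1 XG XA) (γ : Set S) :
    AQ2 S XG XA :=
  (URch So δG γ p.1, p.2, γ, none)

/-- Player-2 transition `h₂`. -/
def h2 (So Sa : Set S) (δG : XG → S → Option XG) (δA : XA → Ev S → Option XA)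
    (q : AQ2 S XG XA) : Ev S → Option (AQ1 XG XA ⊕ AQ2 S XG XA)
  | .plain a =>
    if a ∈ So then
      if q.2.2.2 = some a then some (Sum.inl (q.1, q.2.1))
      else if q.2.2.2 = none ∧ a ∈ ΓGset δG q.1 ∧ a ∈ q.2.2.1 then
        (δA q.2.1 (.plain a)).map fun z => Sum.inl (NXr δG a q.1, z)
      else none
    else none
  | .ins a =>
    if a ∈ Sa ∧ q.2.2.2 = none then
      (δA q.2.1 (.ins a)).map fun z => Sum.inr (q.1, z, q.2.2.1, some a)
    else none
  | .del a =>
    if a ∈ Sa ∧ q.2.2.2 = none ∧ a ∈ ΓGset δG q.1 ∧ a ∈ q.2.2.1 then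
      (δA q.2.1 (.del a)).map fun z =>
        Sum.inr (URch So δG q.2.2.1 (NXr δG a q.1), z, q.2.2.1, none)
    else none

/-- One-step map `H₂ : Q₂ × Σ_{o,e} × Γ ⇀ Q₂` of Definition 6. -/
def H2 (So Sa : Set S) (δG : XG → S → Option XG) (δA : XA → Ev S → Option XA)
    (q : AQ2 S XG XA) : Ev S → Set S → Option (AQ2 S XG XA)
  | .plain a, γ =>
      (h2 So Sa δG δA q (.plain a)).bind fun r =>
        match r with
        | .inl p => some (h1 So δG p γ)
        | .inr _ => none
  | .del a, _ =>
      (h2 So Sa δG δA q (.del a)).bind fun r =>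
        match r with
        | .inr q' => some q'
        | .inl _ => none
  | .ins a, γ =>
      (h2 So Sa δG δA q (.ins a)).bind fun r =>
        match r with
        | .inr q' =>
            (h2 So Sa δG δA q' (.plain a)).bind fun r2 =>
              match r2 with
              | .inl p => some (h1 So δG p γ)
              | .inr _ => none
        | .inl _ => none

/-- Extension of `H₂` to strings with a sequence of control decisions. -/
def H2run (So Sa : Set S) (δG : XG → S → Option XG) (δA : XA → Ev S → Option XA) :
    AQ2 S XG XA → List (Ev S) → List (Set S) → Option (AQ2 S XG XA)
  | q, [], [] => some q
  | q, e :: s, γ :: γs =>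
      (H2 So Sa δG δA q e γ).bind fun q' => H2run So Sa δG δA q' s γs
  | _, _ :: _, [] => none
  | _, [], _ :: _ => none

/-- The sequence of control decisions `γ_i = C_R(P^S(s^i))`, `i = 1, …, |s|`. -/
def ctrlSeq (δR : XR → S → Option XR) (x0R : XR) (s : List (Ev S)) : List (Set S) :=
  (List.range s.length).map fun i => CR δR x0R (PSproj (s.take (i + 1)))

/-- Initial arena state `q₀ = ({x_{0,G}}, x_{0,A})`. -/
def arenaInit (x0G : XG) (x0A : XA) : AQ1 XG XA := ({x0G}, x0A)

/-- The arena `𝒜` regarded as a partial automaton over `E = Γ ∪ Σ_{o,e}`. -/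
def δAr (So Suc Sa : Set S) (δG : XG → S → Option XG) (δA : XA → Ev S → Option XA) :
    (AQ1 XG XA ⊕ AQ2 S XG XA) → (Set S ⊕ Ev S) → Option (AQ1 XG XA ⊕ AQ2 S XG XA)
  | .inl p, .inl γ => if Suc ⊆ γ then some (.inr (h1 So δG p γ)) else none
  | .inr q, .inr e => h2 So Sa δG δA q e
  | _, _ => none

/-- The projection `I₁` onto the plant state-estimate component. -/
def I1 : (AQ1 XG XA ⊕ AQ2 S XG XA) → Set XG := Sum.elim Prod.fst Prod.fst

/-- The projection `I₂` onto the attacker-state component. -/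
def I2 : (AQ1 XG XA ⊕ AQ2 S XG XA) → XA := Sum.elim (fun p => p.2) (fun q => q.2.1)

/-- The language `L(𝒜)` of the arena. -/
def LA (So Suc Sa : Set S) (δG : XG → S → Option XG) (δA : XA → Ev S → Option XA)
    (x0G : XG) (x0A : XA) : Set (List (Set S ⊕ Ev S)) :=
  Lang (δAr So Suc Sa δG δA) (Sum.inl (arenaInit x0G x0A))

/-- The language `L(𝒜^{trim})`: strings of `L(𝒜)` whose runs visit no state `q`
with `I₁(q) ∩ X_crit ≠ ∅`. -/
def LAtrim (So Suc Sa : Set S) (δG : XG → S → Option XG)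
    (δA : XA → Ev S → Option XA) (x0G : XG) (x0A : XA) (Xcrit : Set XG) :
    Set (List (Set S ⊕ Ev S)) :=
  {s | s ∈ LA So Suc Sa δG δA x0G x0A ∧
    ∀ u, u <+: s → ∀ st, run (δAr So Suc Sa δG δA) (Sum.inl (arenaInit x0G x0A)) u =
      some st → I1 st ∩ Xcrit = ∅}

/-- The controllable meta-events `E_c = Γ \ {Σ_uc}`. -/
def Ec (Suc : Set S) : Set (Set S ⊕ Ev S) :=
  {a | ∃ γ : Set S, a = Sum.inl γ ∧ Suc ⊆ γ ∧ γ ≠ Suc}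

/-- `K` is controllable w.r.t. `L` and the uncontrollable events `Euc`. -/
def ControllableLang {E : Type} (L : Set (List E)) (Euc : Set E)
    (K : Set (List E)) : Prop :=
  ∀ s ∈ K, ∀ a ∈ Euc, s ++ [a] ∈ L → s ++ [a] ∈ K

/-- `K` is normal w.r.t. the projection `P` and `L`: `K = P⁻¹(P(K)) ∩ L`. -/
def NormalLang {E : Type} (P : List E → List E) (L K : Set (List E)) : Prop :=
  K = {s | s ∈ L ∧ ∃ t ∈ K, P t = P s}

/-- Natural projection of meta-strings onto the observable meta-events
`E_o = E \ Σ_a^e`. -/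
def projEo : List (Set S ⊕ Ev S) → List (Set S ⊕ Ev S) := fun s =>
  s.flatMap fun a =>
    match a with
    | Sum.inr (.ins _) => []
    | Sum.inr (.del _) => []
    | a => [a]

/-- `L(𝒜^{sup})`: the union of all sublanguages of `L(𝒜^{trim})` that are
controllable w.r.t. `L(𝒜)` and `E \ E_c` and normal w.r.t. `E_o` and `L(𝒜)`. -/
def Lsup (So Suc Sa : Set S) (δG : XG → S → Option XG)
    (δA : XA → Ev S → Option XA) (x0G : XG) (x0A : XA) (Xcrit : Set XG) :
    Set (List (Set S ⊕ Ev S)) :=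
  ⋃₀ {K | K ⊆ LAtrim So Suc Sa δG δA x0G x0A Xcrit ∧
      ControllableLang (LA So Suc Sa δG δA x0G x0A) (Ec Suc)ᶜ K ∧
      NormalLang projEo (LA So Suc Sa δG δA x0G x0A) K}

/-- The run word `W(s; γ₀, …, γ_{|s|})` in the arena. -/
def Wword (γ0 : Set S) (s : List (Ev S)) (γs : List (Set S)) :
    List (Set S ⊕ Ev S) :=
  Sum.inl γ0 :: (s.zip γs).flatMap fun p =>
    match p.1 with
    | .plain a => [Sum.inr (Ev.plain a), Sum.inl p.2]
    | .del a => [Sum.inr (Ev.del a)]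
    | .ins a => [Sum.inr (Ev.ins a), Sum.inr (Ev.plain a), Sum.inl p.2]

/-- The projection `η : E* → Σ_o*` erasing all meta-events not in `Σ_o`. -/
def ηproj (So : Set S) : List (Set S ⊕ Ev S) → List S := fun s =>
  s.flatMap fun a =>
    match a with
    | Sum.inr (.plain e) => if e ∈ So then [e] else []
    | _ => []


/-- The all-out attack strategy: a single state with every event of `Σ_{o,e}`
defined (as a self-loop). -/
def allOutδ (So Sa : Set S) : Unit → Ev S → Option Unit := fun _ e =>
  if inOe So Sa e then some () else none

/-- The supervisor extracted from a generator of `L(𝒜^{sup})` by a choice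
function `c` of control decisions (Algorithm 1): on an observable enabled event
follow the arena (choose `c y`, then the event), on an unobservable enabled
event self-loop, and disable events outside `c y`. -/
def extractR {Y : Type} (So : Set S) (δg : Y → (Set S ⊕ Ev S) → Option Y)
    (c : Y → Set S) : Y → S → Option Y := fun y a =>
  if a ∈ c y then
    if a ∈ So then
      some (((δg y (Sum.inl (c y))).bind fun y' =>
        δg y' (Sum.inr (Ev.plain a))).getD y)
    else some y
  else none

/-- The language `L_R` built inductively from a supervisor `R` inside the arena:
`ε ∈ L_R`; from a player-2 state every event of `Σ_{o,e}` feasible in `𝒜` may be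
appended; from a player-1 state the control decisions `Σ_uc` and `C_R(η(s))`
may be appended. -/
inductive LRmem {S XG XA XR : Type} (So Suc Sa : Set S)
    (δG : XG → S → Option XG) (x0G : XG)
    (δA : XA → Ev S → Option XA) (x0A : XA)
    (δR : XR → S → Option XR) (x0R : XR) : List (Set S ⊕ Ev S) → Prop
  | nil : LRmem So Suc Sa δG x0G δA x0A δR x0R []
  | p2 (s : List (Set S ⊕ Ev S)) (q : AQ2 S XG XA) (e : Ev S) :
      LRmem So Suc Sa δG x0G δA x0A δR x0R s →
      run (δAr So Suc Sa δG δA) (Sum.inl (arenaInit x0G x0A)) s = some (Sum.inr q) →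
      inOe So Sa e →
      (run (δAr So Suc Sa δG δA) (Sum.inl (arenaInit x0G x0A))
        (s ++ [Sum.inr e])).isSome →
      LRmem So Suc Sa δG x0G δA x0A δR x0R (s ++ [Sum.inr e])
  | p1uc (s : List (Set S ⊕ Ev S)) (p : AQ1 XG XA) :
      LRmem So Suc Sa δG x0G δA x0A δR x0R s →
      run (δAr So Suc Sa δG δA) (Sum.inl (arenaInit x0G x0A)) s = some (Sum.inl p) →
      LRmem So Suc Sa δG x0G δA x0A δR x0R (s ++ [Sum.inl Suc])
  | p1R (s : List (Set S ⊕ Ev S)) (p : AQ1 XG XA) :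
      LRmem So Suc Sa δG x0G δA x0A δR x0R s →
      run (δAr So Suc Sa δG δA) (Sum.inl (arenaInit x0G x0A)) s = some (Sum.inl p) →
      LRmem So Suc Sa δG x0G δA x0A δR x0R (s ++ [Sum.inl (CR δR x0R (ηproj So s))])

section Aux

variable {S XG XR XA : Type}

theorem run_append {X E : Type} (δ : X → E → Option X) (x : X) (u v : List E) :
    run δ x (u ++ v) = (run δ x u).bind fun y => run δ y v := by
  induction u generalizing x with
  | nil => simp [run]
  | cons e u ih =>
    simp only [List.cons_append, run]
    cases δ x e <;> simp [ih]

theorem ΔRrun_append (δR : XR → S → Option XR) (y : XR) (u v : List S) :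
    ΔRrun δR y (u ++ v) = ΔRrun δR (ΔRrun δR y u) v := by
  induction u generalizing y with
  | nil => simp [ΔRrun]
  | cons e u ih => simp [ΔRrun, ih]

/-- The `G`-component of a composed run is a run of the attacked plant. -/
theorem δGRA_fst (So Sa : Set S) (δG : XG → S → Option XG) (δR : XR → S → Option XR)
    (δA : XA → Ev S → Option XA) (p : XG × XR × XA) (e : Ev S)
    (p' : XG × XR × XA) (h : δGRA So Sa δG δR δA p e = some p') :
    δGa Sa δG p.1 e = some p'.1 := by
  cases e with
  | plain a =>
    by_cases hSo : a ∈ So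
    · simp only [δGRA, if_pos hSo] at h
      cases hG : δGa Sa δG p.1 (Ev.plain a) <;>
        cases hRr : δRa Sa δR p.2.1 (Ev.plain a) <;>
        cases hAa : δA p.2.2 (Ev.plain a) <;>
        simp [hG, hRr, hAa] at h <;> simp [hG, ← h]
    · simp only [δGRA, if_neg hSo] at h
      cases hG : δGa Sa δG p.1 (Ev.plain a) <;>
        cases hRr : δRa Sa δR p.2.1 (Ev.plain a) <;>
        simp [hG, hRr] at h <;> simp [hG, ← h]
  | ins a =>
    simp only [δGRA] at h
    cases hG : δGa Sa δG p.1 (Ev.ins a) <;>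
      cases hRr : δRa Sa δR p.2.1 (Ev.ins a) <;>
      cases hAa : δA p.2.2 (Ev.ins a) <;>
      simp [hG, hRr, hAa] at h <;> simp [hG, ← h]
  | del a =>
    simp only [δGRA] at h
    cases hG : δGa Sa δG p.1 (Ev.del a) <;>
      cases hRr : δRa Sa δR p.2.1 (Ev.del a) <;>
      cases hAa : δA p.2.2 (Ev.del a) <;>
      simp [hG, hRr, hAa] at h <;> simp [hG, ← h]

theorem run_δGRA_fst (So Sa : Set S) (δG : XG → S → Option XG)
    (δR : XR → S → Option XR) (δA : XA → Ev S → Option XA)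
    (t : List (Ev S)) (p p' : XG × XR × XA)
    (h : run (δGRA So Sa δG δR δA) p t = some p') :
    run (δGa Sa δG) p.1 t = some p'.1 := by
  induction t generalizing p with
  | nil => simp [run] at h ⊢; rw [h]
  | cons e t ih =>
    simp only [run] at h ⊢
    cases hp : δGRA So Sa δG δR δA p e with
    | none => simp [hp] at h
    | some q =>
      rw [hp] at h; simp at h
      rw [δGRA_fst So Sa δG δR δA p e q hp]
      simpa using ih q h

theorem run_δGa_PG (Sa : Set S) (δG : XG → S → Option XG) (t : List (Ev S))
    (x x' : XG) (h : run (δGa Sa δG) x t = some x') :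
    run δG x (PGproj t) = some x' := by
  induction t generalizing x with
  | nil => simpa [run, PGproj] using h
  | cons e t ih =>
    simp only [run] at h
    cases e with
    | plain a =>
      cases hG : δG x a with
      | none => simp [δGa, hG] at h
      | some y =>
        simp [δGa, hG] at h
        simp [PGproj, run, hG]
        simpa [PGproj] using ih y h
    | ins a =>
      by_cases ha : a ∈ Sa
      · simp [δGa, ha] at h
        simpa [PGproj] using ih x h
      · simp [δGa, ha] at h
    | del a =>
      by_cases ha : a ∈ Sa
      · cases hG : δG x a with
        | none => simp [δGa, ha, hG] at h
        | some y =>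
          simp [δGa, ha, hG] at h
          simp [PGproj, run, hG]
          simpa [PGproj] using ih y h
      · simp [δGa, ha] at h

theorem run_snoc {X E : Type} (δ : X → E → Option X) (x : X) (u : List E) (e : E) :
    run δ x (u ++ [e]) = (run δ x u).bind fun y => δ y e := by
  rw [run_append]
  cases run δ x u with
  | none => rfl
  | some y => simp only [Option.bind_some, run]; cases δ y e <;> simp [run]

theorem CR_mem (δR : XR → S → Option XR) (x0R : XR) (w : List S) (b : S) :
    b ∈ CR δR x0R w ↔ (δR (ΔRrun δR x0R w) b).isSome := Iff.rfl

theorem γ_enab (So Suc : Set S) (δR : XR → S → Option XR) (x0R : XR)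
    (hR : IsSupRealization So Suc δR) (w : List S) (γ : Set S)
    (hγ : γ = Suc ∨ γ = CR δR x0R w) (b : S) (hb : b ∈ γ) :
    (δR (ΔRrun δR x0R w) b).isSome := by
  rcases hγ with rfl | rfl
  · exact hR.1 _ b hb
  · exact hb

/-- Extension of a composed run along an unobservable enabled string. -/
theorem run_unobs (So Suc Sa : Set S) (δG : XG → S → Option XG)
    (δR : XR → S → Option XR) (hR : IsSupRealization So Suc δR)
    (δA : XA → Ev S → Option XA)
    (t' : List S) (x x' : XG) (y : XR) (z : XA)
    (ht : ∀ b ∈ t', b ∉ So ∧ (δR y b).isSome)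
    (hx : run δG x t' = some x') :
    run (δGRA So Sa δG δR δA) (x, y, z) (t'.map Ev.plain) = some (x', y, z) := by
  induction t' generalizing x with
  | nil =>
    simp [run] at hx ⊢
    rw [hx]
  | cons b t' ih =>
    obtain ⟨hbSo, hbEn⟩ := ht b (by simp)
    have hyb : δR y b = some y := hR.2 y b hbSo hbEn
    simp only [run] at hx
    cases hGb : δG x b with
    | none => simp [hGb] at hx
    | some x1 =>
      rw [hGb] at hx
      simp only [Option.bind_some] at hx
      have step : δGRA So Sa δG δR δA (x, y, z) (Ev.plain b) = some (x1, y, z) := by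
        simp [δGRA, hbSo, δGa, δRa, hGb, hyb]
      simp only [List.map_cons, run, step, Option.bind_some]
      exact ih x1 (fun c hc => ht c (by simp [hc])) hx

theorem ηproj_inl (So : Set S) (s : List (Set S ⊕ Ev S)) (γ : Set S) :
    ηproj So (s ++ [Sum.inl γ]) = ηproj So s := by simp [ηproj]

theorem ηproj_plain (So : Set S) (s : List (Set S ⊕ Ev S)) (a : S) (ha : a ∈ So) :
    ηproj So (s ++ [Sum.inr (Ev.plain a)]) = ηproj So s ++ [a] := by
  simp [ηproj, ha]

theorem ηproj_ins (So : Set S) (s : List (Set S ⊕ Ev S)) (a : S) :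
    ηproj So (s ++ [Sum.inr (Ev.ins a)]) = ηproj So s := by simp [ηproj]

theorem ηproj_del (So : Set S) (s : List (Set S ⊕ Ev S)) (a : S) :
    ηproj So (s ++ [Sum.inr (Ev.del a)]) = ηproj So s := by simp [ηproj]

/-- The invariant attached to an arena state reached by a string of `L_R`. -/
def GoodSt (So Suc Sa : Set S) (δG : XG → S → Option XG) (x0G : XG)
    (δA : XA → Ev S → Option XA) (x0A : XA)
    (δR : XR → S → Option XR) (x0R : XR)
    (s : List (Set S ⊕ Ev S)) : (AQ1 XG XA ⊕ AQ2 S XG XA) → Prop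
  | .inl p => ∀ x ∈ p.1, ∃ t, run (δGRA So Sa δG δR δA) (x0G, x0R, x0A) t =
      some (x, ΔRrun δR x0R (ηproj So s), p.2)
  | .inr q =>
      (q.2.2.2 = none → q.2.2.1 = Suc ∨ q.2.2.1 = CR δR x0R (ηproj So s)) ∧
      ∀ x ∈ q.1, ∃ t, run (δGRA So Sa δG δR δA) (x0G, x0R, x0A) t =
        some (x, ΔRrun δR x0R (ηproj So s ++ q.2.2.2.toList), q.2.1)

theorem LR_inv (So Suc Sa : Set S)
    (δG : XG → S → Option XG) (x0G : XG)
    (δR : XR → S → Option XR) (x0R : XR) (hR : IsSupRealization So Suc δR)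
    (δA : XA → Ev S → Option XA) (x0A : XA)
    {s : List (Set S ⊕ Ev S)}
    (hs : LRmem So Suc Sa δG x0G δA x0A δR x0R s) :
    ∃ st, run (δAr So Suc Sa δG δA) (Sum.inl (arenaInit x0G x0A)) s = some st ∧
      GoodSt So Suc Sa δG x0G δA x0A δR x0R s st := by
  induction hs with
  | nil =>
    refine ⟨Sum.inl (arenaInit x0G x0A), rfl, ?_⟩
    intro x hx
    rcases hx with rfl
    exact ⟨[], by simp [run, ηproj, ΔRrun, arenaInit]⟩
  | p1uc s p hmem hrun ih =>
    obtain ⟨st, hst, hG⟩ := ih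
    rw [hrun] at hst
    injection hst with hst
    subst hst
    refine ⟨Sum.inr (h1 So δG p Suc), ?_, ?_⟩
    · rw [run_snoc, hrun]
      simp [δAr]
    · constructor
      · intro _; exact Or.inl rfl
      · simp only [h1]
        intro x'' hx''
        obtain ⟨t', ht', x, hxp, hrunG⟩ := hx''
        obtain ⟨t, ht⟩ := hG x hxp
        refine ⟨t ++ t'.map Ev.plain, ?_⟩
        rw [run_append, ht, Option.bind_some]
        rw [ηproj_inl]
        have := run_unobs So Suc Sa δG δR hR δA t' x x''
          (ΔRrun δR x0R (ηproj So s)) p.2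
          (fun b hb => ⟨(ht' b hb).1, γ_enab So Suc δR x0R hR _ Suc (Or.inl rfl) b (ht' b hb).2⟩)
          hrunG
        simpa [h1] using this
  | p1R s p hmem hrun ih =>
    obtain ⟨st, hst, hG⟩ := ih
    rw [hrun] at hst
    injection hst with hst
    subst hst
    have hsub : Suc ⊆ CR δR x0R (ηproj So s) := fun b hb => hR.1 _ b hb
    refine ⟨Sum.inr (h1 So δG p (CR δR x0R (ηproj So s))), ?_, ?_⟩
    · rw [run_snoc, hrun]
      simp [δAr, hsub]
    · constructor
      · intro _
        right
        rw [ηproj_inl]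
        rfl
      · simp only [h1]
        intro x'' hx''
        obtain ⟨t', ht', x, hxp, hrunG⟩ := hx''
        obtain ⟨t, ht⟩ := hG x hxp
        refine ⟨t ++ t'.map Ev.plain, ?_⟩
        rw [run_append, ht, Option.bind_some]
        rw [ηproj_inl]
        have := run_unobs So Suc Sa δG δR hR δA t' x x''
          (ΔRrun δR x0R (ηproj So s)) p.2
          (fun b hb => ⟨(ht' b hb).1,
            γ_enab So Suc δR x0R hR _ _ (Or.inr rfl) b (ht' b hb).2⟩)
          hrunG
        simpa [h1] using this
  | p2 s q e hmem hrun hOe hdef ih =>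
    obtain ⟨st, hst, hG⟩ := ih
    rw [hrun] at hst
    injection hst with hst
    subst hst
    obtain ⟨hGγ, hGx⟩ := hG
    rw [run_snoc, hrun] at hdef
    simp only [Option.bind_some] at hdef
    have hdef2 : (h2 So Sa δG δA q e).isSome := hdef
    obtain ⟨st', hst'⟩ := Option.isSome_iff_exists.mp hdef2
    refine ⟨st', ?_, ?_⟩
    · rw [run_snoc, hrun]
      simpa [δAr] using hst'
    obtain ⟨S1, z, γ, σ⟩ := q
    cases e with
    | plain a =>
      simp only [h2] at hst'
      split at hst'
      case isFalse => exact absurd hst' (by simp)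
      case isTrue hSo =>
      split at hst'
      case isTrue hσ =>
        -- pending insertion consumed
        injection hst' with hst'
        subst hst'
        intro x hx
        obtain ⟨t, ht⟩ := hGx x hx
        refine ⟨t, ?_⟩
        rw [ηproj_plain So s a hSo]
        simpa [hσ] using ht
      case isFalse hne =>
      split at hst'
      case isFalse => exact absurd hst' (by simp)
      case isTrue hcond =>
        obtain ⟨hσ, hΓ, hγa⟩ := hcond
        cases hAa : δA z (Ev.plain a) with
        | none => rw [hAa] at hst'; exact absurd hst' (by simp)
        | some z' =>
          rw [hAa] at hst'
          simp only [Option.map_some] at hst'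
          injection hst' with hst'
          subst hst'
          intro x' hx'
          obtain ⟨x, hxS, hGxa⟩ := hx'
          obtain ⟨t, ht⟩ := hGx x hxS
          rw [hσ] at ht
          simp only [Option.toList_none, List.append_nil] at ht
          have hen : (δR (ΔRrun δR x0R (ηproj So s)) a).isSome :=
            γ_enab So Suc δR x0R hR _ γ (hGγ hσ) a hγa
          set y := ΔRrun δR x0R (ηproj So s) with hy
          obtain ⟨y', hy'⟩ := Option.isSome_iff_exists.mp hen
          have step : δGRA So Sa δG δR δA (x, y, z) (Ev.plain a) = some (x', y', z') := by
            simp [δGRA, hSo, δGa, δRa, hGxa, hy', hAa]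
          have hΔ : ΔRrun δR x0R (ηproj So s ++ [a]) = y' := by
            rw [ΔRrun_append, ← hy]
            simp [ΔRrun, hy']
          refine ⟨t ++ [Ev.plain a], ?_⟩
          rw [run_snoc, ht, Option.bind_some, step, ηproj_plain So s a hSo, hΔ]
    | ins a =>
      simp only [h2] at hst'
      split at hst'
      case isFalse => exact absurd hst' (by simp)
      case isTrue hcond =>
        obtain ⟨ha, hσ⟩ := hcond
        cases hAa : δA z (Ev.ins a) with
        | none => rw [hAa] at hst'; exact absurd hst' (by simp)
        | some z' =>
          rw [hAa] at hst'
          simp only [Option.map_some] at hst'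
          injection hst' with hst'
          subst hst'
          constructor
          · intro h; simp at h
          · intro x hxS
            obtain ⟨t, ht⟩ := hGx x hxS
            rw [hσ] at ht
            simp only [Option.toList_none, List.append_nil] at ht
            set y := ΔRrun δR x0R (ηproj So s) with hy
            have step : δGRA So Sa δG δR δA (x, y, z) (Ev.ins a) =
                some (x, (δR y a).getD y, z') := by
              cases hya : δR y a with
              | none => simp [δGRA, δGa, δRa, ha, hAa, hya]
              | some v => simp [δGRA, δGa, δRa, ha, hAa, hya]
            refine ⟨t ++ [Ev.ins a], ?_⟩
            rw [run_snoc, ht, Option.bind_some, step]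
            rw [ηproj_ins]
            have : ΔRrun δR x0R (ηproj So s ++ [a]) = (δR y a).getD y := by
              rw [ΔRrun_append, ← hy]
              simp [ΔRrun]
            simp [this]
    | del a =>
      simp only [h2] at hst'
      split at hst'
      case isFalse => exact absurd hst' (by simp)
      case isTrue hcond =>
        obtain ⟨ha, hσ, hΓ, hγa⟩ := hcond
        cases hAa : δA z (Ev.del a) with
        | none => rw [hAa] at hst'; exact absurd hst' (by simp)
        | some z' =>
          rw [hAa] at hst'
          simp only [Option.map_some] at hst'
          injection hst' with hst'
          subst hst'
          constructor
          · intro _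
            rw [ηproj_del]
            exact hGγ hσ
          · intro x'' hx''
            obtain ⟨t', ht', x', hx'N, hrunG⟩ := hx''
            obtain ⟨x, hxS, hGxa⟩ := hx'N
            obtain ⟨t, ht⟩ := hGx x hxS
            rw [hσ] at ht
            simp only [Option.toList_none, List.append_nil] at ht
            set y := ΔRrun δR x0R (ηproj So s) with hy
            have hen : (δR y a).isSome :=
              γ_enab So Suc δR x0R hR _ γ (hGγ hσ) a hγa
            have step : δGRA So Sa δG δR δA (x, y, z) (Ev.del a) =
                some (x', y, z') := by
              obtain ⟨v, hv⟩ := Option.isSome_iff_exists.mp hen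
              simp [δGRA, δGa, δRa, ha, hAa, hGxa, hv]
            have tail := run_unobs So Suc Sa δG δR hR δA t' x' x'' y z'
              (fun b hb => ⟨(ht' b hb).1,
                γ_enab So Suc δR x0R hR _ γ (hGγ hσ) b (ht' b hb).2⟩)
              hrunG
            refine ⟨(t ++ [Ev.del a]) ++ t'.map Ev.plain, ?_⟩
            rw [run_append, run_snoc, ht, Option.bind_some, step, Option.bind_some,
              tail, ηproj_del]
            simp [hy]

theorem LRmem_prefix (So Suc Sa : Set S)
    (δG : XG → S → Option XG) (x0G : XG)
    (δA : XA → Ev S → Option XA) (x0A : XA)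
    (δR : XR → S → Option XR) (x0R : XR)
    {s : List (Set S ⊕ Ev S)}
    (hs : LRmem So Suc Sa δG x0G δA x0A δR x0R s) :
    ∀ u, u <+: s → LRmem So Suc Sa δG x0G δA x0A δR x0R u := by
  induction hs with
  | nil =>
    intro u hu
    rw [List.prefix_nil.mp hu]
    exact .nil
  | p2 s q e h1 h2 h3 h4 ih =>
    intro u hu
    rcases List.prefix_concat_iff.mp hu with hu | hu
    · subst hu; exact .p2 s q e h1 h2 h3 h4
    · exact ih u hu
  | p1uc s p h1 h2 ih =>
    intro u hu
    rcases List.prefix_concat_iff.mp hu with hu | hu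
    · subst hu; exact .p1uc s p h1 h2
    · exact ih u hu
  | p1R s p h1 h2 ih =>
    intro u hu
    rcases List.prefix_concat_iff.mp hu with hu | hu
    · subst hu; exact .p1R s p h1 h2
    · exact ih u hu

end Aux

/-- if `R` is robust w.r.t. `G`, `X_crit` and `A`, then
`L_R ⊆ L(𝒜^{trim})`, i.e., no string of `L_R` reaches a state `q` of `𝒜` with
`I₁(q) ∩ X_crit ≠ ∅`. -/
theorem LR_subset_LAtrim
    [Finite S] [Finite XG] [Finite XR] [Finite XA]
    (So Suc Sa : Set S) (hSa : Sa ⊆ So) (Xcrit : Set XG)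
    (δG : XG → S → Option XG) (x0G : XG)
    (δR : XR → S → Option XR) (x0R : XR) (hR : IsSupRealization So Suc δR)
    (δA : XA → Ev S → Option XA) (x0A : XA) (hA : IsAttack So Sa δA)
    (hRob : Robust So Sa Xcrit δG x0G δR x0R δA x0A) :
    {s | LRmem So Suc Sa δG x0G δA x0A δR x0R s} ⊆
      LAtrim So Suc Sa δG δA x0G x0A Xcrit := by
  intro s hs
  obtain ⟨st, hst, _⟩ := LR_inv So Suc Sa δG x0G δR x0R hR δA x0A hs
  refine ⟨?_, ?_⟩
  · show (run (δAr So Suc Sa δG δA) (Sum.inl (arenaInit x0G x0A)) s).isSome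
    simp [hst]
  · intro u hu st' hst'
    have hu' := LRmem_prefix So Suc Sa δG x0G δA x0A δR x0R hs u hu
    obtain ⟨st0, hst0, hG0⟩ := LR_inv So Suc Sa δG x0G δR x0R hR δA x0A hu'
    rw [hst'] at hst0
    injection hst0 with h
    subst h
    rw [Set.eq_empty_iff_forall_notMem]
    rintro x ⟨hxI, hxC⟩
    have hex : ∃ y z, ∃ t, run (δGRA So Sa δG δR δA) (x0G, x0R, x0A) t = some (x, y, z) := by
      cases st' with
      | inl p =>
        obtain ⟨t, ht⟩ := hG0 x hxI
        exact ⟨_, _, t, ht⟩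
      | inr q =>
        obtain ⟨t, ht⟩ := hG0.2 x hxI
        exact ⟨_, _, t, ht⟩
    obtain ⟨y, z, t, ht⟩ := hex
    have hGa : run (δGa Sa δG) x0G t = some x :=
      run_δGRA_fst So Sa δG δR δA t (x0G, x0R, x0A) (x, y, z) ht
    have hPG : run δG x0G (PGproj t) = some x := run_δGa_PG Sa δG t x0G x hGa
    exact hRob t (by simp [Lang, ht]) x hPG hxC
end RobustDES
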